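/- Let θ be a real 2×2 matrix, η ∈ ℝ², and φ : [0,T] → ℝ continuous. Define z(t) = ∫₀^t cos φ(s) ds and w(t) = ∫₀^t sin φ(s)·exp(z(s)θ)η ds. Set φ₂(t) := φ(T-t) + π and define z₂, w₂ analogously from φ₂. Then z₂(t) = z(T-t) - z(T) and w₂(t) = exp(-z(T)θ)(w(T-t) - w(T)) for all t ∈ [0,T]. -/

import Mathlib

open Real

/-- The horizontal `ℝ`-component: `z(t) = ∫₀^t cos φ(s) ds`. -/
noncomputable def zComp (φ : ℝ → ℝ) (t : ℝ) : ℝ :=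
  ∫ s in (0 : ℝ)..t, cos (φ s)

/-- The horizontal `ℝ²`-component: `w(t) = ∫₀^t sin φ(s) · exp(z(s)θ)η ds`. -/
noncomputable def wComp (θ : Matrix (Fin 2) (Fin 2) ℝ) (η : Fin 2 → ℝ)
    (φ : ℝ → ℝ) (t : ℝ) : Fin 2 → ℝ :=
  ∫ s in (0 : ℝ)..t, sin (φ s) • (NormedSpace.exp (zComp φ s • θ)).mulVec η

lemma matExp_continuous : Continuous (NormedSpace.exp :
    Matrix (Fin 2) (Fin 2) ℝ → Matrix (Fin 2) (Fin 2) ℝ) := by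
  letI : SeminormedRing (Matrix (Fin 2) (Fin 2) ℝ) := Matrix.linftyOpSemiNormedRing
  letI : NormedRing (Matrix (Fin 2) (Fin 2) ℝ) := Matrix.linftyOpNormedRing
  letI : NormedAlgebra ℝ (Matrix (Fin 2) (Fin 2) ℝ) := Matrix.linftyOpNormedAlgebra
  letI : NormedAlgebra ℚ (Matrix (Fin 2) (Fin 2) ℝ) := NormedAlgebra.restrictScalars ℚ ℝ _
  exact NormedSpace.exp_continuous

/-- Under the symmetry `ε₂`, `φ₂(t) = φ(T - t) + π`, the horizontal components
satisfy `z₂(t) = z(T - t) - z(T)` and `w₂(t) = exp(-z(T)θ)(w(T - t) - w(T))` for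
`t ∈ [0, T]`. -/
theorem symmetry_eps2_horizontal (θ : Matrix (Fin 2) (Fin 2) ℝ) (η : Fin 2 → ℝ)
    (T : ℝ) (hT : 0 ≤ T) (φ : ℝ → ℝ) (hφ : Continuous φ) :
    ∀ t ∈ Set.Icc 0 T,
      zComp (fun s => φ (T - s) + π) t = zComp φ (T - t) - zComp φ T ∧
      wComp θ η (fun s => φ (T - s) + π) t
        = (NormedSpace.exp ((-(zComp φ T)) • θ)).mulVec
            (wComp θ η φ (T - t) - wComp θ η φ T) := by
  have hcos : Continuous fun s => cos (φ s) := Real.continuous_cos.comp hφ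
  have hcosInt : ∀ a b : ℝ, IntervalIntegrable (fun s => cos (φ s))
      MeasureTheory.volume a b := fun a b => hcos.intervalIntegrable a b
  -- the z-part, for all t
  have hz : ∀ t : ℝ, zComp (fun s => φ (T - s) + π) t = zComp φ (T - t) - zComp φ T := by
    intro t
    have h1 : zComp (fun s => φ (T - s) + π) t
        = ∫ s in (0 : ℝ)..t, -cos (φ (T - s)) := by
      simp [zComp, Real.cos_add_pi]
    rw [h1]
    have h2 : (∫ s in (0 : ℝ)..t, -cos (φ (T - s)))
        = -∫ s in (0 : ℝ)..t, (fun u => cos (φ u)) (T - s) := by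
      rw [intervalIntegral.integral_neg]
    rw [h2, intervalIntegral.integral_comp_sub_left (fun u => cos (φ u)) T]
    have h3 : (∫ x in (T - t)..(T - 0), cos (φ x))
        = zComp φ T - zComp φ (T - t) := by
      rw [sub_zero]
      have := intervalIntegral.integral_interval_sub_left (a := (0:ℝ)) (b := T)
        (c := T - t) (hcosInt 0 T) (hcosInt 0 (T - t))
      rw [← this]; rfl
    rw [h3]; ring
  intro t ht
  refine ⟨hz t, ?_⟩
  -- continuity of the w-integrand
  have hzc : Continuous (zComp φ) :=
    intervalIntegral.continuous_primitive hcosInt 0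
  have hg : Continuous fun u : ℝ =>
      sin (φ u) • (NormedSpace.exp (zComp φ u • θ)).mulVec η := by
    have h1 : Continuous fun u : ℝ => NormedSpace.exp (zComp φ u • θ) :=
      matExp_continuous.comp (hzc.smul continuous_const)
    exact ((Real.continuous_sin.comp hφ)).smul (h1.matrix_mulVec continuous_const)
  have hgInt : ∀ a b : ℝ, IntervalIntegrable
      (fun u => sin (φ u) • (NormedSpace.exp (zComp φ u • θ)).mulVec η)
      MeasureTheory.volume a b := fun a b => hg.intervalIntegrable a b
  set A : Matrix (Fin 2) (Fin 2) ℝ := NormedSpace.exp ((-(zComp φ T)) • θ) with hA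
  -- rewrite the integrand of w₂
  have hexp : ∀ u : ℝ, NormedSpace.exp ((zComp φ u - zComp φ T) • θ)
      = A * NormedSpace.exp (zComp φ u • θ) := by
    intro u
    letI : SeminormedRing (Matrix (Fin 2) (Fin 2) ℝ) := Matrix.linftyOpSemiNormedRing
    letI : NormedRing (Matrix (Fin 2) (Fin 2) ℝ) := Matrix.linftyOpNormedRing
    letI : NormedAlgebra ℝ (Matrix (Fin 2) (Fin 2) ℝ) := Matrix.linftyOpNormedAlgebra
    letI : NormedAlgebra ℚ (Matrix (Fin 2) (Fin 2) ℝ) := NormedAlgebra.restrictScalars ℚ ℝ _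
    have hcomm : Commute ((-(zComp φ T)) • θ) (zComp φ u • θ) :=
      ((Commute.refl θ).smul_left _).smul_right _
    have : (zComp φ u - zComp φ T) • θ = (-(zComp φ T)) • θ + zComp φ u • θ := by
      rw [← add_smul]; ring_nf
    rw [this]; exact NormedSpace.exp_add_of_commute hcomm
  have hint_eq : wComp θ η (fun s => φ (T - s) + π) t
      = ∫ s in (0 : ℝ)..t, A.mulVec ((fun u =>
          (-sin (φ u)) • (NormedSpace.exp (zComp φ u • θ)).mulVec η) (T - s)) := by
    unfold wComp
    refine intervalIntegral.integral_congr fun s _ => ?_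
    have h1 : zComp (fun s => φ (T - s) + π) s = zComp φ (T - s) - zComp φ T := hz s
    rw [h1, Real.sin_add_pi, hexp (T - s), ← Matrix.mulVec_mulVec,
      Matrix.mulVec_smul]
  rw [hint_eq]
  -- pull the continuous linear map out of the integral
  let L : (Fin 2 → ℝ) →L[ℝ] (Fin 2 → ℝ) := LinearMap.toContinuousLinearMap A.mulVecLin
  have hLg : Continuous fun u : ℝ =>
      (-sin (φ u)) • (NormedSpace.exp (zComp φ u • θ)).mulVec η := by
    have := hg.neg
    simpa only [neg_smul, Pi.neg_def] using this
  have hInt2 : IntervalIntegrable (fun s : ℝ => (fun u =>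
      (-sin (φ u)) • (NormedSpace.exp (zComp φ u • θ)).mulVec η) (T - s))
      MeasureTheory.volume 0 t :=
    (hLg.comp (continuous_const.sub continuous_id)).intervalIntegrable 0 t
  have hpull : (∫ s in (0 : ℝ)..t, A.mulVec ((fun u =>
        (-sin (φ u)) • (NormedSpace.exp (zComp φ u • θ)).mulVec η) (T - s)))
      = L (∫ s in (0 : ℝ)..t, (fun u =>
        (-sin (φ u)) • (NormedSpace.exp (zComp φ u • θ)).mulVec η) (T - s)) := by
    rw [← L.intervalIntegral_comp_comm hInt2]
    rfl
  rw [hpull, intervalIntegral.integral_comp_sub_left (fun u =>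
    (-sin (φ u)) • (NormedSpace.exp (zComp φ u • θ)).mulVec η) T]
  have h4 : (∫ x in (T - t)..(T - 0), (-sin (φ x)) •
      (NormedSpace.exp (zComp φ x • θ)).mulVec η)
      = wComp θ η φ (T - t) - wComp θ η φ T := by
    rw [sub_zero]
    have hneg : (∫ x in (T - t)..T, (-sin (φ x)) •
        (NormedSpace.exp (zComp φ x • θ)).mulVec η)
        = -∫ x in (T - t)..T, sin (φ x) •
            (NormedSpace.exp (zComp φ x • θ)).mulVec η := by
      rw [← intervalIntegral.integral_neg]
      simp [neg_smul]
    rw [hneg]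
    have := intervalIntegral.integral_interval_sub_left (a := (0:ℝ)) (b := T)
      (c := T - t) (hgInt 0 T) (hgInt 0 (T - t))
    rw [← this]
    unfold wComp
    abel
  rw [h4]
  rfl
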